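/- arXiv:1203.1643 — 2 statements merged into one kernel-verified Lean document; each statement's English description precedes it below -/
import Mathlib

section
/- Let w ≥ 1 and r ≥ 1 be integers, and let r₁,…,r_w be integers with 1 ≤ r_j ≤ r for all j. Set r_max = max_j r_j, r_min = min_j r_j, and n = Σ_{j=1}^{w} r_j. Let T = [T_{i,j}]_{1≤i,j≤w} be a random block matrix over F₂ (with wr rows and n columns) in which each block T_{i,j} has size r×r_j, where for every pair (i,j) with j ≤ i the entries of T_{i,j} are independent and uniformly distributed on F₂ (independently across all such blocks), and for every pair (i,j) with j > i the block T_{i,j} is an arbitrary fixed r×r_j matrix over F₂. Then for every integer γ with 0 ≤ γ ≤ n−1, setting u = ⌈(n−γ)/r_min⌉, the probability that rank(T) < n − γ is at most u·(1 − 2^{−r_max})·2^{−γ + n − wr + (r − r_min)(u−1)}. -/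
open Finset

section Aux
lemma card_filter_lt_fin (N K : ℕ) : (univ.filter fun b : Fin N => (b:ℕ) < K).card = min K N := by
  rw [← Fintype.card_subtype, ← Fintype.card_fin (min K N)]
  refine Fintype.card_of_bijective
    (f := fun b : {b : Fin N // (b:ℕ) < K} => (⟨(b:ℕ), lt_min b.2 b.1.2⟩ : Fin (min K N))) ⟨?_, ?_⟩
  · rintro ⟨⟨a,ha⟩,ha'⟩ ⟨⟨b,hb⟩,hb'⟩ h
    simpa using congrArg Fin.val h
  · rintro ⟨v, hv⟩
    exact ⟨⟨⟨v, lt_of_lt_of_le hv (min_le_right _ _)⟩, lt_of_lt_of_le hv (min_le_left _ _)⟩, rfl⟩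
lemma card_supp_subset {α : Type} [Fintype α] [DecidableEq α] (A : Finset α) :
    (univ.filter fun x : α → ZMod 2 => ∀ c ∉ A, x c = 0).card = 2 ^ A.card := by
  rw [← Fintype.card_subtype]
  have e : {x : α → ZMod 2 // ∀ c ∉ A, x c = 0} ≃ ({c : α // c ∈ A} → ZMod 2) := by
    refine ⟨fun x c => x.1 c.1, fun g => ⟨fun c => if h : c ∈ A then g ⟨c, h⟩ else 0, fun c hc => dif_neg hc⟩, ?_, ?_⟩
    · rintro ⟨x, hx⟩; ext c; by_cases h : c ∈ A
      · simp [h]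
      · simp [h, hx c h]
    · intro g; ext ⟨c, hc⟩; simp [hc]
  rw [Fintype.card_congr e, Fintype.card_fun, Fintype.card_coe]
  norm_num

lemma exists_kernel_vec {ρ κ : Type} [Fintype ρ] [Fintype κ] [DecidableEq κ]
    (M : Matrix ρ κ (ZMod 2)) (S : Finset κ) (h : M.rank < S.card) :
    ∃ x : κ → ZMod 2, x ≠ 0 ∧ (∀ c ∉ S, x c = 0) ∧ M.mulVec x = 0 := by
  classical
  let ext : ({c : κ // c ∈ S} → ZMod 2) →ₗ[ZMod 2] (κ → ZMod 2) :=
    { toFun := fun y c => if h : c ∈ S then y ⟨c, h⟩ else 0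
      map_add' := by intro a b; ext c; by_cases h : c ∈ S <;> simp [h]
      map_smul' := by intro a b; ext c; by_cases h : c ∈ S <;> simp [h] }
  let φ := M.mulVecLin.comp ext
  have hni : ¬ Function.Injective φ := by
    intro hin
    have h1 : Module.finrank (ZMod 2) (LinearMap.range φ) = S.card := by
      rw [LinearMap.finrank_range_of_inj hin, Module.finrank_pi, Fintype.card_coe]
    have h2 : LinearMap.range φ ≤ LinearMap.range M.mulVecLin := LinearMap.range_comp_le_range _ _
    have h3 : Module.finrank (ZMod 2) (LinearMap.range φ) ≤ M.rank := by
      rw [Matrix.rank]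
      exact Submodule.finrank_mono h2
    omega
  rw [Function.not_injective_iff] at hni
  obtain ⟨a, b, hab, hne⟩ := hni
  refine ⟨ext (a - b), ?_, ?_, ?_⟩
  · intro h0
    apply hne
    have : a - b = 0 := by
      funext c
      have := congrFun h0 c.1
      simpa [ext, c.2] using this
    rw [sub_eq_zero] at this; exact this
  · intro c hc; simp [ext, hc]
  · have : φ (a - b) = 0 := by simp [map_sub, hab]
    simpa [φ, Matrix.mulVecLin] using this

lemma count_rows (w r : ℕ) (rj : Fin w → ℕ)
    (F : (i j : Fin w) → Matrix (Fin r) (Fin (rj j)) (ZMod 2))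
    (x : (Σ j : Fin w, Fin (rj j)) → ZMod 2) (m : Fin w) (a : Fin (rj m))
    (hxa : x ⟨m, a⟩ = 1) :
    (univ.filter fun L : (i j : Fin w) → Matrix (Fin r) (Fin (rj j)) (ZMod 2) =>
        ∀ i : Fin w, m ≤ i → ∀ p : Fin r,
          ((Matrix.of (fun (p : Fin w × Fin r) (c : Σ j : Fin w, Fin (rj j)) =>
            if c.1 ≤ p.1 then L p.1 c.1 p.2 c.2 else F p.1 c.1 p.2 c.2)).mulVec x) (i, p) = 0).card
      * 2 ^ (r * (w - m.val))
    ≤ Fintype.card ((i j : Fin w) → Matrix (Fin r) (Fin (rj j)) (ZMod 2)) := by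
  classical
  let Amat : ((i j : Fin w) → Matrix (Fin r) (Fin (rj j)) (ZMod 2)) →
      Matrix (Fin w × Fin r) (Σ j : Fin w, Fin (rj j)) (ZMod 2) := fun L =>
    Matrix.of (fun (p : Fin w × Fin r) (c : Σ j : Fin w, Fin (rj j)) =>
      if c.1 ≤ p.1 then L p.1 c.1 p.2 c.2 else F p.1 c.1 p.2 c.2)
  let E : Finset ((i j : Fin w) → Matrix (Fin r) (Fin (rj j)) (ZMod 2)) :=
    univ.filter fun L =>
      ∀ i : Fin w, m ≤ i → ∀ p : Fin r, ((Amat L).mulVec x) (i, p) = 0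
  show E.card * 2 ^ (r * (w - m.val)) ≤ _
  let Ψ : (((i j : Fin w) → Matrix (Fin r) (Fin (rj j)) (ZMod 2)) ×
      ({i : Fin w // m ≤ i} → Fin r → ZMod 2)) →
      ((i j : Fin w) → Matrix (Fin r) (Fin (rj j)) (ZMod 2)) := fun Lv i j =>
    Matrix.of fun p b =>
      Lv.1 i j p b + (if (⟨j, b⟩ : Σ j : Fin w, Fin (rj j)) = ⟨m, a⟩ then
        (if h : m ≤ i then Lv.2 ⟨i, h⟩ p else 0) else 0)
  have key : ∀ L v (i : Fin w) (p : Fin r),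
      ((Amat (Ψ (L, v))).mulVec x) (i, p)
        = ((Amat L).mulVec x) (i, p) + (if h : m ≤ i then v ⟨i, h⟩ p else 0) := by
    intro L v i p
    simp only [Matrix.mulVec, dotProduct, Amat, Ψ, Matrix.of_apply]
    have hsplit : ∀ c : (Σ j : Fin w, Fin (rj j)),
        (if c.1 ≤ i then (L i c.1 p c.2 +
            (if (⟨c.1, c.2⟩ : Σ j : Fin w, Fin (rj j)) = ⟨m, a⟩ then
              (if h : m ≤ i then v ⟨i, h⟩ p else 0) else 0)) else F i c.1 p c.2) * x c
        = (if c.1 ≤ i then L i c.1 p c.2 else F i c.1 p c.2) * x c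
          + (if c = ⟨m, a⟩ then (if h : m ≤ i then v ⟨i, h⟩ p else 0) * x c else 0) := by
      rintro ⟨j, b⟩
      by_cases hc : (⟨j, b⟩ : Σ j : Fin w, Fin (rj j)) = ⟨m, a⟩
      · cases hc
        by_cases hmi : m ≤ i
        · simp [hmi, add_mul]
        · simp [hmi]
      · simp [hc]
    calc (∑ c : (Σ j : Fin w, Fin (rj j)),
          (if c.1 ≤ i then (L i c.1 p c.2 +
            (if (⟨c.1, c.2⟩ : Σ j : Fin w, Fin (rj j)) = ⟨m, a⟩ then
              (if h : m ≤ i then v ⟨i, h⟩ p else 0) else 0)) else F i c.1 p c.2) * x c)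
        = ∑ c : (Σ j : Fin w, Fin (rj j)),
            ((if c.1 ≤ i then L i c.1 p c.2 else F i c.1 p c.2) * x c
              + (if c = ⟨m, a⟩ then (if h : m ≤ i then v ⟨i, h⟩ p else 0) * x c else 0)) := by
          exact Finset.sum_congr rfl (fun c _ => hsplit c)
      _ = _ := by
          rw [Finset.sum_add_distrib, Finset.sum_ite_eq' univ (⟨m, a⟩ : Σ j : Fin w, Fin (rj j))]
          simp [hxa]
  have hinj : Set.InjOn Ψ ((E ×ˢ (univ : Finset ({i : Fin w // m ≤ i} → Fin r → ZMod 2))) : Finset _) := by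
    rintro ⟨L1, v1⟩ h1 ⟨L2, v2⟩ h2 heq
    simp only [Finset.coe_product, Set.mem_prod, Finset.mem_coe, Finset.mem_filter, E] at h1 h2
    have hv : v1 = v2 := by
      funext ip p
      obtain ⟨i, hi⟩ := ip
      have e1 := key L1 v1 i p
      have e2 := key L2 v2 i p
      rw [heq] at e1
      rw [e2] at e1
      rw [h1.1.2 i hi p, h2.1.2 i hi p] at e1
      simpa [hi] using e1.symm
    have hL : L1 = L2 := by
      funext i j
      ext p b
      have := congrFun (congrFun (congrFun (congrFun heq i) j) p) b
      simp only [Ψ, Matrix.of_apply, hv] at this ⊢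
      exact add_right_cancel this
    simp [Prod.ext_iff, hv, hL]
  have hcard : (E ×ˢ (univ : Finset ({i : Fin w // m ≤ i} → Fin r → ZMod 2))).card
      ≤ (univ : Finset ((i j : Fin w) → Matrix (Fin r) (Fin (rj j)) (ZMod 2))).card :=
    Finset.card_le_card_of_injOn Ψ (fun _ _ => mem_univ _) hinj
  rw [Finset.card_product, Finset.card_univ, Finset.card_univ] at hcard
  have hV : Fintype.card ({i : Fin w // m ≤ i} → Fin r → ZMod 2) = 2 ^ (r * (w - m.val)) := by
    rw [Fintype.card_fun, Fintype.card_fun, Fintype.card_fin, ZMod.card]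
    have : Fintype.card {i : Fin w // m ≤ i} = w - m.val := by
      rw [Fintype.card_subtype]
      have : (univ.filter fun i : Fin w => m ≤ i) = Finset.Ici m := by
        ext i; simp
      rw [this, Fin.card_Ici]
    rw [this, ← pow_mul]
  rw [hV] at hcard
  exact hcard

lemma card_sandwich {β : Type} [Fintype β] [DecidableEq β]
    (Y : Finset (β → ZMod 2)) (T T' : Finset β) (hsub : T' ⊆ T)
    (hY : ∀ x ∈ Y, (∀ c ∉ T, x c = 0) ∧ ¬(∀ c ∉ T', x c = 0)) :
    Y.card ≤ 2 ^ T.card - 2 ^ T'.card := by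
  classical
  have h1 : Y ⊆ (univ.filter fun x : β → ZMod 2 => ∀ c ∉ T, x c = 0) \
      (univ.filter fun x : β → ZMod 2 => ∀ c ∉ T', x c = 0) := by
    intro x hx
    rw [Finset.mem_sdiff, mem_filter, mem_filter]
    obtain ⟨h2, h3⟩ := hY x hx
    exact ⟨⟨mem_univ _, h2⟩, fun hc => h3 hc.2⟩
  have hHG : (univ.filter fun x : β → ZMod 2 => ∀ c ∉ T', x c = 0)
      ⊆ (univ.filter fun x : β → ZMod 2 => ∀ c ∉ T, x c = 0) := by
    intro x hx
    rw [mem_filter] at *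
    exact ⟨hx.1, fun c hc => hx.2 c fun h => hc (hsub h)⟩
  calc Y.card ≤ _ := Finset.card_le_card h1
  _ = _ - _ := Finset.card_sdiff_of_subset hHG
  _ = 2 ^ T.card - 2 ^ T'.card := by rw [card_supp_subset, card_supp_subset]
end Aux

/-- **Lemma on RBLT matrices, "vertical" case `r_j ≤ r`.**
A random block lower-triangular (RBLT) matrix `T = [T_{i,j}]` with parameters `w`, `r`,
`{r_j}` (`1 ≤ r_j ≤ r`) has `w·r` rows and `n = Σ_j r_j` columns; the blocks `T_{i,j}` with
`j ≤ i` are `r × r_j` matrices with i.i.d. uniform entries over `F₂` (modelled by sampling the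
family `L` of all lower blocks uniformly), and the blocks with `j > i` are arbitrary fixed
matrices `F i j`.  Then for every `0 ≤ γ ≤ n − 1`, with `u = ⌈(n−γ)/r_min⌉`,
`Pr{rank T < n − γ} ≤ u (1 − 2^{−r_max}) 2^{−γ + n − wr + (r − r_min)(u−1)}`.
The probability is expressed as the fraction of block assignments `L` for which the
resulting matrix has rank less than `n − γ`. -/
theorem stmt_1 (w r : ℕ) (hw : 1 ≤ w) (hr : 1 ≤ r)
    (rj : Fin w → ℕ) (hrj : ∀ j, 1 ≤ rj j ∧ rj j ≤ r)
    (rmax rmin : ℕ)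
    (hrmax : IsGreatest (Set.range rj) rmax)
    (hrmin : IsLeast (Set.range rj) rmin)
    (n : ℕ) (hn : n = ∑ j, rj j)
    (F : (i j : Fin w) → Matrix (Fin r) (Fin (rj j)) (ZMod 2))
    (γ : ℕ) (hγ : γ ≤ n - 1)
    (u : ℕ) (hu : (u : ℤ) = ⌈((n - γ : ℕ) : ℚ) / (rmin : ℚ)⌉) :
    ((Finset.univ.filter
        (fun L : (i j : Fin w) → Matrix (Fin r) (Fin (rj j)) (ZMod 2) =>
          (Matrix.of (fun (p : Fin w × Fin r) (c : Σ j : Fin w, Fin (rj j)) =>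
            if c.1 ≤ p.1 then L p.1 c.1 p.2 c.2 else F p.1 c.1 p.2 c.2)).rank
            < n - γ)).card : ℝ)
      / (Fintype.card ((i j : Fin w) → Matrix (Fin r) (Fin (rj j)) (ZMod 2)) : ℝ)
    ≤ (u : ℝ) * (1 - (2 : ℝ) ^ (-(rmax : ℤ))) *
        (2 : ℝ) ^ (-(γ : ℤ) + (n : ℤ) - (w : ℤ) * (r : ℤ)
          + ((r : ℤ) - (rmin : ℤ)) * ((u : ℤ) - 1)) := by
  classical
  -- basic numeric facts
  have hrmin1 : 1 ≤ rmin := by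
    obtain ⟨⟨j, hj⟩, -⟩ := hrmin
    exact hj ▸ (hrj j).1
  have hrminle : ∀ j, rmin ≤ rj j := fun j => hrmin.2 ⟨j, rfl⟩
  have hrmaxge : ∀ j, rj j ≤ rmax := fun j => hrmax.2 ⟨j, rfl⟩
  have hrmaxr : rmax ≤ r := by
    obtain ⟨⟨j, hj⟩, -⟩ := hrmax
    exact hj ▸ (hrj j).2
  have hrminr : rmin ≤ r := le_trans (hrmin.2 ⟨⟨0, hw⟩, rfl⟩) (hrj ⟨0, hw⟩).2
  have hnw : w ≤ n := by
    calc w = ∑ _j : Fin w, 1 := by simp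
    _ ≤ ∑ j, rj j := Finset.sum_le_sum fun j _ => (hrj j).1
    _ = n := hn.symm
  have hn1 : 1 ≤ n := le_trans hw hnw
  set N : ℕ := n - γ with hN
  have hγn : γ < n := by omega
  have hN1 : 1 ≤ N := by omega
  have hNZ : (N : ℤ) = (n : ℤ) - γ := by omega
  -- block structure bookkeeping
  set rj' : ℕ → ℕ := fun i => if h : i < w then rj ⟨i, h⟩ else 0 with hrj'
  set spre : ℕ → ℕ := fun t => ∑ i ∈ range t, rj' i with hspre
  set cc : ℕ → ℕ := fun t => min (spre t) N with hcc
  set k : Fin w → ℕ := fun j => cc (j.val + 1) - cc j.val with hk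
  have hspre_succ : ∀ t, spre (t + 1) = spre t + rj' t := fun t => Finset.sum_range_succ _ t
  have hccmono : Monotone cc := by
    have : Monotone spre := monotone_nat_of_le_succ fun t => by rw [hspre_succ]; omega
    exact fun a b hab => min_le_min (this hab) le_rfl
  have hk_eq : ∀ j : Fin w, k j = cc (j.val + 1) - cc j.val := fun j => rfl
  have hk_le : ∀ j : Fin w, k j ≤ rj j := by
    intro j
    have h1 : cc (j.val + 1) ≤ cc j.val + rj' j.val := by
      have := hspre_succ j.val
      simp only [hcc]; omega
    have : rj' j.val = rj j := by simp [hrj', j.isLt]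
    simp only [hk]; omega
  have hspre_w : spre w = n := by
    rw [hn]
    show ∑ i ∈ range w, rj' i = _
    rw [← Fin.sum_univ_eq_sum_range]
    exact Finset.sum_congr rfl fun j _ => by simp [hrj', j.isLt]
  have hspre_ge : ∀ t, t ≤ w → rmin * t ≤ spre t := by
    intro t ht
    calc rmin * t = ∑ _i ∈ range t, rmin := by simp [mul_comm]
    _ ≤ ∑ i ∈ range t, rj' i := Finset.sum_le_sum fun i hi => by
        have : i < w := lt_of_lt_of_le (mem_range.mp hi) ht
        simp [hrj', this, hrminle]
    _ = spre t := rfl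
  have sum_k_lt : ∀ t, t ≤ w →
      ∑ j ∈ univ.filter (fun j : Fin w => (j : ℕ) < t), k j = cc t := by
    intro t
    induction t with
    | zero => intro _; simp [hcc, hspre]
    | succ t ih =>
      intro ht
      have htw : t < w := ht
      have hins : univ.filter (fun j : Fin w => (j : ℕ) < t + 1)
          = insert ⟨t, htw⟩ (univ.filter (fun j : Fin w => (j : ℕ) < t)) := by
        ext j
        simp only [mem_filter, mem_univ, true_and, mem_insert]
        constructor
        · intro hj
          rcases Nat.lt_succ_iff_lt_or_eq.mp hj with h | h
          · exact Or.inr h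
          · exact Or.inl (Fin.ext h)
        · rintro (rfl | hj)
          · exact Nat.lt_succ_self t
          · exact Nat.lt_succ_of_lt hj
      rw [hins, Finset.sum_insert (by simp), ih (le_of_lt htw)]
      have : cc t ≤ cc (t + 1) := hccmono (Nat.le_succ t)
      simp only [hk]
      omega
  -- the support set S
  set S : Finset (Σ j : Fin w, Fin (rj j)) :=
    univ.filter (fun c => (c.2 : ℕ) < k c.1) with hS
  have card_SP : ∀ P : Finset (Fin w),
      (univ.filter fun c : Σ j : Fin w, Fin (rj j) => (c.2 : ℕ) < k c.1 ∧ c.1 ∈ P).card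
        = ∑ j ∈ P, k j := by
    intro P
    have hset : (univ.filter fun c : Σ j : Fin w, Fin (rj j) => (c.2 : ℕ) < k c.1 ∧ c.1 ∈ P)
        = P.sigma (fun j => univ.filter fun b : Fin (rj j) => (b : ℕ) < k j) := by
      ext ⟨j, b⟩
      simp only [mem_filter, mem_univ, true_and, Finset.mem_sigma]
      tauto
    rw [hset, Finset.card_sigma]
    exact Finset.sum_congr rfl fun j _ => by
      rw [card_filter_lt_fin]; exact min_eq_left (le_trans (hk_le j) le_rfl)
  have hsum_all : ∑ j : Fin w, k j = N := by
    have h2 : (univ : Finset (Fin w)) = univ.filter (fun j : Fin w => (j : ℕ) < w) := by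
      ext j; simp [j.isLt]
    rw [h2, sum_k_lt w le_rfl]
    simp only [hcc, hspre_w]
    omega
  have hS_card : S.card = N := by
    have h1 : S = univ.filter
        (fun c : Σ j : Fin w, Fin (rj j) => (c.2 : ℕ) < k c.1 ∧ c.1 ∈ (univ : Finset (Fin w))) := by
      ext c; simp [hS]
    rw [h1, card_SP]
    have h2 : (univ : Finset (Fin w)) = univ.filter (fun j : Fin w => (j : ℕ) < w) := by
      ext j; simp [j.isLt]
    rw [h2, sum_k_lt w le_rfl]
    simp only [hcc, hspre_w]
    omega
  -- the random matrix
  set Amat : ((i j : Fin w) → Matrix (Fin r) (Fin (rj j)) (ZMod 2)) →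
      Matrix (Fin w × Fin r) (Σ j : Fin w, Fin (rj j)) (ZMod 2) := fun L =>
    Matrix.of (fun (p : Fin w × Fin r) (c : Σ j : Fin w, Fin (rj j)) =>
      if c.1 ≤ p.1 then L p.1 c.1 p.2 c.2 else F p.1 c.1 p.2 c.2) with hAmat
  set cardL : ℕ := Fintype.card ((i j : Fin w) → Matrix (Fin r) (Fin (rj j)) (ZMod 2)) with hcardL
  have hcardL0 : 0 < cardL := Fintype.card_pos
  set bad : Finset ((i j : Fin w) → Matrix (Fin r) (Fin (rj j)) (ZMod 2)) :=
    univ.filter (fun L => (Amat L).rank < n - γ) with hbad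
  show (bad.card : ℝ) / cardL ≤ _
  -- the set of candidate kernel vectors
  set X : Finset ((Σ j : Fin w, Fin (rj j)) → ZMod 2) :=
    univ.filter (fun x => x ≠ 0 ∧ ∀ c ∉ S, x c = 0) with hX
  -- bottom block of a vector
  set key : ((Σ j : Fin w, Fin (rj j)) → ZMod 2) → Fin w := fun x =>
    if hx : (univ.filter (fun j : Fin w => ∃ b, x ⟨j, b⟩ ≠ 0)).Nonempty
    then (univ.filter (fun j : Fin w => ∃ b, x ⟨j, b⟩ ≠ 0)).min' hx
    else ⟨0, hw⟩ with hkey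
  set cnt : ((Σ j : Fin w, Fin (rj j)) → ZMod 2) → ℕ := fun x =>
    (univ.filter (fun L : (i j : Fin w) → Matrix (Fin r) (Fin (rj j)) (ZMod 2) =>
      (Amat L).mulVec x = 0)).card with hcnt
  -- step A: union bound
  have stepA : bad.card ≤ ∑ x ∈ X, cnt x := by
    have hsub : bad ⊆ X.biUnion (fun x => univ.filter fun L => (Amat L).mulVec x = 0) := by
      intro L hL
      rw [hbad, mem_filter] at hL
      have hrank : (Amat L).rank < S.card := by rw [hS_card]; exact hL.2
      obtain ⟨x, hx0, hxsupp, hxker⟩ := exists_kernel_vec (Amat L) S hrank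
      exact mem_biUnion.mpr ⟨x, mem_filter.mpr ⟨mem_univ _, hx0, hxsupp⟩,
        mem_filter.mpr ⟨mem_univ _, hxker⟩⟩
    exact le_trans (Finset.card_le_card hsub) (Finset.card_biUnion_le)
  -- step D: per-vector probability bound
  have hone : ∀ z : ZMod 2, z ≠ 0 → z = 1 := by decide
  have hJne : ∀ x ∈ X, (univ.filter (fun j : Fin w => ∃ b, x ⟨j, b⟩ ≠ 0)).Nonempty := by
    intro x hx
    rw [hX, mem_filter] at hx
    obtain ⟨c, hc⟩ := Function.ne_iff.mp hx.2.1
    exact ⟨c.1, mem_filter.mpr ⟨mem_univ _, ⟨c.2, by rw [Sigma.eta]; exact hc⟩⟩⟩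
  have hkeyeq : ∀ (x : (Σ j : Fin w, Fin (rj j)) → ZMod 2)
      (hne : (univ.filter (fun j : Fin w => ∃ b, x ⟨j, b⟩ ≠ 0)).Nonempty),
      key x = (univ.filter (fun j : Fin w => ∃ b, x ⟨j, b⟩ ≠ 0)).min' hne := by
    intro x hne
    simp only [hkey, dif_pos hne]
  have hkeynz : ∀ x ∈ X, ∃ b, x ⟨key x, b⟩ ≠ 0 := by
    intro x hx
    have hm := Finset.min'_mem _ (hJne x hx)
    rw [← hkeyeq x (hJne x hx)] at hm
    exact (mem_filter.mp hm).2
  have hkeymin : ∀ x ∈ X, ∀ j : Fin w, (∃ b, x ⟨j, b⟩ ≠ 0) → key x ≤ j := by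
    intro x hx j hj
    rw [hkeyeq x (hJne x hx)]
    exact Finset.min'_le (univ.filter (fun j : Fin w => ∃ b, x ⟨j, b⟩ ≠ 0)) j
      (mem_filter.mpr ⟨mem_univ _, hj⟩)
  have stepD : ∀ x ∈ X, (cnt x : ℝ) ≤ (cardL : ℝ) * (2:ℝ) ^ (-((r * (w - (key x).val) : ℕ) : ℤ)) := by
    intro x hx
    obtain ⟨b, hb⟩ := hkeynz x hx
    have hxa : x ⟨key x, b⟩ = 1 := hone _ hb
    have hsubE : (univ.filter (fun L : (i j : Fin w) → Matrix (Fin r) (Fin (rj j)) (ZMod 2) =>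
          (Amat L).mulVec x = 0))
        ⊆ (univ.filter (fun L : (i j : Fin w) → Matrix (Fin r) (Fin (rj j)) (ZMod 2) =>
          ∀ i : Fin w, key x ≤ i → ∀ p : Fin r, ((Amat L).mulVec x) (i, p) = 0)) := by
      refine Finset.monotone_filter_right _ ?_
      intro L _ hL i hi p
      rw [hL]
      rfl
    have hcr : (univ.filter (fun L : (i j : Fin w) → Matrix (Fin r) (Fin (rj j)) (ZMod 2) =>
          ∀ i : Fin w, key x ≤ i → ∀ p : Fin r, ((Amat L).mulVec x) (i, p) = 0)).card
        * 2 ^ (r * (w - (key x).val)) ≤ cardL :=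
      count_rows w r rj F x (key x) b hxa
    have hnat : cnt x * 2 ^ (r * (w - (key x).val)) ≤ cardL :=
      le_trans (Nat.mul_le_mul_right _ (Finset.card_le_card hsubE)) hcr
    have h2 : (0:ℝ) < 2 ^ (r * (w - (key x).val)) := by positivity
    have heq : (cardL : ℝ) * (2:ℝ) ^ (-((r * (w - (key x).val) : ℕ) : ℤ))
        = (cardL : ℝ) / 2 ^ (r * (w - (key x).val)) := by
      rw [zpow_neg, zpow_natCast]
      ring
    rw [heq, le_div_iff₀ h2]
    exact_mod_cast hnat
  -- properties of members of a fiber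
  have fiber0 : ∀ x ∈ X, ∀ c : (Σ j : Fin w, Fin (rj j)), c.1 < key x → x c = 0 := by
    intro x hx c hc
    by_contra h0
    have := hkeymin x hx c.1 ⟨c.2, by rw [Sigma.eta]; exact h0⟩
    exact absurd hc (not_lt.mpr this)
  -- step E: per-fiber cardinality bound
  have stepE : ∀ m : Fin w, (X.filter (fun x => key x = m)).Nonempty →
      ((X.filter (fun x => key x = m)).card : ℝ)
        ≤ (1 - (2:ℝ) ^ (-(rmax : ℤ))) * (2:ℝ) ^ ((N : ℤ) - rmin * m.val)
          ∧ rmin * m.val < N := by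
    intro m hne
    obtain ⟨x0, hx0mem⟩ := hne
    rw [mem_filter] at hx0mem
    obtain ⟨hx0X, hx0key⟩ := hx0mem
    -- k m ≥ 1
    obtain ⟨b0, hb0⟩ := hkeynz x0 hx0X
    have hx0S : ∀ c ∉ S, x0 c = 0 := by
      have := (mem_filter.mp hx0X).2
      exact this.2
    have hb0S : (⟨key x0, b0⟩ : Σ j : Fin w, Fin (rj j)) ∈ S := by
      by_contra hc
      exact hb0 (hx0S _ hc)
    have hkm1 : 1 ≤ k m := by
      rw [← hx0key]
      have hlt : (b0 : ℕ) < k (key x0) := (mem_filter.mp hb0S).2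
      omega
    -- cc facts
    have hccle : cc (m.val + 1) ≤ N := by simp only [hcc]; exact min_le_right _ _
    have hccm : cc m.val < N := by
      simp only [hk] at hkm1
      omega
    have hccspre : cc m.val = spre m.val := by
      simp only [hcc] at hccm ⊢
      omega
    have hrmm : rmin * m.val < N := by
      have h1 := hspre_ge m.val (le_of_lt m.isLt)
      omega
    refine ⟨?_, hrmm⟩
    -- the counting sets
    have hYprop : ∀ x ∈ X.filter (fun x => key x = m),
        (∀ c ∉ (univ.filter (fun c : Σ j : Fin w, Fin (rj j) =>
            (c.2 : ℕ) < k c.1 ∧ c.1 ∈ Finset.Ici m)), x c = 0)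
        ∧ ¬(∀ c ∉ (univ.filter (fun c : Σ j : Fin w, Fin (rj j) =>
            (c.2 : ℕ) < k c.1 ∧ c.1 ∈ Finset.Ioi m)), x c = 0) := by
      intro x hx
      rw [mem_filter] at hx
      obtain ⟨hxX, hxkey⟩ := hx
      have hxS : ∀ c ∉ S, x c = 0 := (mem_filter.mp hxX).2.2
      constructor
      · intro c hc
        simp only [mem_filter, mem_univ, true_and, not_and] at hc
        by_cases h1 : (c.2 : ℕ) < k c.1
        · have h2 := hc h1
          rw [Finset.mem_Ici, not_le] at h2
          exact fiber0 x hxX c (by rw [hxkey]; exact h2)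
        · refine hxS c ?_
          rw [hS, mem_filter]
          intro hcon
          exact h1 hcon.2
      · intro hall
        obtain ⟨b1, hb1⟩ := hkeynz x hxX
        apply hb1
        apply hall
        rw [mem_filter]
        intro hcon
        have := hcon.2.2
        rw [Finset.mem_Ioi, ← hxkey] at this
        exact absurd this (lt_irrefl _)
    have hsub12 : (univ.filter (fun c : Σ j : Fin w, Fin (rj j) =>
            (c.2 : ℕ) < k c.1 ∧ c.1 ∈ Finset.Ioi m))
        ⊆ (univ.filter (fun c : Σ j : Fin w, Fin (rj j) =>
            (c.2 : ℕ) < k c.1 ∧ c.1 ∈ Finset.Ici m)) := by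
      intro c hc
      rw [mem_filter] at hc ⊢
      refine ⟨hc.1, hc.2.1, ?_⟩
      rw [Finset.mem_Ici]
      exact le_of_lt (Finset.mem_Ioi.mp hc.2.2)
    have hcard1 := card_sandwich (X.filter (fun x => key x = m)) _ _ hsub12 hYprop
    rw [card_SP, card_SP] at hcard1
    have hsplitIci : ∑ j ∈ Finset.Ici m, k j = k m + ∑ j ∈ Finset.Ioi m, k j := by
      have hins : Finset.Ici m = insert m (Finset.Ioi m) := by
        ext j
        simp only [Finset.mem_Ici, Finset.mem_insert, Finset.mem_Ioi]
        constructor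
        · intro h
          rcases eq_or_lt_of_le h with h | h
          · exact Or.inl h.symm
          · exact Or.inr h
        · rintro (rfl | h)
          · exact le_rfl
          · exact le_of_lt h
      rw [hins, Finset.sum_insert (by simp)]
    have hIioval : ∑ j ∈ Finset.Iio m, k j = cc m.val := by
      rw [← sum_k_lt m.val (le_of_lt m.isLt)]
      apply Finset.sum_congr _ (fun _ _ => rfl)
      ext j
      simp only [Finset.mem_Iio, mem_filter, mem_univ, true_and, Fin.lt_def]
    have hIcival : ∑ j ∈ Finset.Ici m, k j = N - cc m.val := by
      have hsp := Finset.sum_filter_add_sum_filter_not univ (fun j : Fin w => (j : ℕ) < m.val) k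
      have h1 : univ.filter (fun j : Fin w => (j : ℕ) < m.val) = Finset.Iio m := by
        ext j
        simp only [Finset.mem_Iio, mem_filter, mem_univ, true_and, Fin.lt_def]
      have h2 : univ.filter (fun j : Fin w => ¬ (j : ℕ) < m.val) = Finset.Ici m := by
        ext j
        simp only [Finset.mem_Ici, mem_filter, mem_univ, true_and, not_lt, Fin.le_def]
      rw [h1, h2, hIioval, hsum_all] at hsp
      omega
    set tm : ℕ := ∑ j ∈ Finset.Ici m, k j with htm
    have hkmtm : k m ≤ tm := by omega
    have hkmrmax : k m ≤ rmax := le_trans (hk_le m) (hrmaxge m)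
    have hcard1' : (X.filter (fun x => key x = m)).card ≤ 2 ^ tm - 2 ^ (tm - k m) := by
      have he : ∑ j ∈ Finset.Ioi m, k j = tm - k m := by omega
      rw [he] at hcard1
      exact hcard1
    have hpowle : 2 ^ (tm - k m) ≤ 2 ^ tm := Nat.pow_le_pow_right (by norm_num) (by omega)
    have hcast : ((X.filter (fun x => key x = m)).card : ℝ)
        ≤ (2:ℝ) ^ ((tm : ℤ)) - (2:ℝ) ^ ((tm : ℤ) - k m) := by
      have hc2 := (Nat.cast_le (α := ℝ)).mpr hcard1'
      rw [Nat.cast_sub hpowle] at hc2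
      push_cast at hc2
      rw [← zpow_natCast (2:ℝ) tm, ← zpow_natCast (2:ℝ) (tm - k m)] at hc2
      have hexp : ((tm - k m : ℕ) : ℤ) = (tm : ℤ) - k m := by
        omega
      rw [hexp] at hc2
      exact hc2
    refine le_trans hcast ?_
    have hfac : (2:ℝ) ^ ((tm : ℤ)) - (2:ℝ) ^ ((tm : ℤ) - k m)
        = (2:ℝ) ^ ((tm : ℤ)) * (1 - (2:ℝ) ^ (-(k m : ℤ))) := by
      rw [mul_sub, mul_one, ← zpow_add₀ (by norm_num : (2:ℝ) ≠ 0)]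
      ring_nf
    rw [hfac]
    have h2le : (2:ℝ) ^ ((tm : ℤ)) ≤ (2:ℝ) ^ ((N : ℤ) - rmin * m.val) := by
      apply zpow_le_zpow_right₀ (by norm_num : (1:ℝ) ≤ 2)
      have hsge := hspre_ge m.val (le_of_lt m.isLt)
      omega
    have h3le : (1 - (2:ℝ) ^ (-(k m : ℤ))) ≤ (1 - (2:ℝ) ^ (-(rmax : ℤ))) := by
      have hmono : (2:ℝ) ^ (-(rmax : ℤ)) ≤ (2:ℝ) ^ (-(k m : ℤ)) := by
        apply zpow_le_zpow_right₀ (by norm_num : (1:ℝ) ≤ 2)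
        omega
      linarith
    have h4 : (0:ℝ) ≤ 1 - (2:ℝ) ^ (-(k m : ℤ)) := by
      have h0 : (2:ℝ) ^ (-(k m : ℤ)) ≤ (2:ℝ) ^ (0 : ℤ) :=
        zpow_le_zpow_right₀ (by norm_num : (1:ℝ) ≤ 2) (by omega)
      rw [zpow_zero] at h0
      linarith
    calc (2:ℝ) ^ ((tm : ℤ)) * (1 - (2:ℝ) ^ (-(k m : ℤ)))
        ≤ (2:ℝ) ^ ((N : ℤ) - rmin * m.val) * (1 - (2:ℝ) ^ (-(rmax : ℤ))) := by
          apply mul_le_mul h2le h3le h4 (by positivity)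
    _ = (1 - (2:ℝ) ^ (-(rmax : ℤ))) * (2:ℝ) ^ ((N : ℤ) - rmin * m.val) := by ring
  -- m.val < u for nonempty fibers
  have hrminQ : (0:ℚ) < (rmin:ℚ) := by exact_mod_cast hrmin1
  have hmu : ∀ t : ℕ, rmin * t < N → t < u := by
    intro t ht
    by_contra hc
    push_neg at hc
    have h1 : ((N : ℚ) / (rmin:ℚ)) ≤ (u : ℚ) := by
      have h0 := Int.le_ceil ((N : ℚ) / (rmin : ℚ))
      rw [← hu] at h0
      exact_mod_cast h0
    rw [div_le_iff₀ hrminQ] at h1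
    have h2 : (u : ℚ) * rmin ≤ (t : ℚ) * rmin := by
      have : (u:ℚ) ≤ (t:ℚ) := by exact_mod_cast hc
      exact mul_le_mul_of_nonneg_right this (le_of_lt hrminQ)
    have h3 : ((rmin * t : ℕ) : ℚ) < (N:ℚ) := by exact_mod_cast ht
    push_cast at h3
    nlinarith
  have hδ0 : (0:ℝ) ≤ 1 - (2:ℝ) ^ (-(rmax : ℤ)) := by
    have h0 : (2:ℝ) ^ (-(rmax : ℤ)) ≤ (2:ℝ) ^ (0 : ℤ) :=
      zpow_le_zpow_right₀ (by norm_num : (1:ℝ) ≤ 2) (by omega)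
    rw [zpow_zero] at h0
    linarith
  set Xexp : ℤ := -(γ : ℤ) + (n : ℤ) - (w : ℤ) * (r : ℤ)
      + ((r : ℤ) - (rmin : ℤ)) * ((u : ℤ) - 1) with hXexp
  rw [div_le_iff₀ (show (0:ℝ) < (cardL:ℝ) by exact_mod_cast hcardL0)]
  have hterm : ∀ m : Fin w, ∑ x ∈ X.filter (fun x => key x = m), (cnt x : ℝ)
      ≤ (if (X.filter (fun x => key x = m)).Nonempty
          then (cardL : ℝ) * ((1 - (2:ℝ) ^ (-(rmax : ℤ))) * (2:ℝ) ^ Xexp) else 0) := by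
    intro m
    by_cases hne : (X.filter (fun x => key x = m)).Nonempty
    · rw [if_pos hne]
      obtain ⟨hEcard, hrmmN⟩ := stepE m hne
      have hmu' : m.val < u := hmu m.val hrmmN
      have hxb : ∀ x ∈ X.filter (fun x => key x = m),
          (cnt x : ℝ) ≤ (cardL : ℝ) * (2:ℝ) ^ (-((r * (w - m.val) : ℕ) : ℤ)) := by
        intro x hx
        rw [mem_filter] at hx
        have hD := stepD x hx.1
        rw [hx.2] at hD
        exact hD
      have hexple : (N : ℤ) - rmin * m.val + (-((r * (w - m.val) : ℕ) : ℤ)) ≤ Xexp := by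
        have hc1 : ((r * (w - m.val) : ℕ) : ℤ) = (r:ℤ) * ((w:ℤ) - m.val) := by
          have := m.isLt
          push_cast [Nat.cast_sub (le_of_lt m.isLt)]
          ring
        rw [hc1, hXexp]
        have hc2 : ((r:ℤ) - rmin) * (m.val : ℤ) ≤ ((r:ℤ) - rmin) * ((u:ℤ) - 1) := by
          apply mul_le_mul_of_nonneg_left _ (by
            have : (rmin:ℤ) ≤ (r:ℤ) := by exact_mod_cast hrminr
            omega)
          omega
        ring_nf
        ring_nf at hc2
        linarith [hc2, hNZ]
      calc ∑ x ∈ X.filter (fun x => key x = m), (cnt x : ℝ)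
          ≤ ∑ _x ∈ X.filter (fun x => key x = m),
              (cardL : ℝ) * (2:ℝ) ^ (-((r * (w - m.val) : ℕ) : ℤ)) := Finset.sum_le_sum hxb
        _ = ((X.filter (fun x => key x = m)).card : ℝ)
              * ((cardL : ℝ) * (2:ℝ) ^ (-((r * (w - m.val) : ℕ) : ℤ))) := by
            rw [Finset.sum_const, nsmul_eq_mul]
        _ ≤ ((1 - (2:ℝ) ^ (-(rmax : ℤ))) * (2:ℝ) ^ ((N : ℤ) - rmin * m.val))
              * ((cardL : ℝ) * (2:ℝ) ^ (-((r * (w - m.val) : ℕ) : ℤ))) := by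
            apply mul_le_mul_of_nonneg_right hEcard (by positivity)
        _ = (cardL : ℝ) * ((1 - (2:ℝ) ^ (-(rmax : ℤ)))
              * ((2:ℝ) ^ ((N : ℤ) - rmin * m.val) * (2:ℝ) ^ (-((r * (w - m.val) : ℕ) : ℤ)))) := by
            ring
        _ ≤ (cardL : ℝ) * ((1 - (2:ℝ) ^ (-(rmax : ℤ))) * (2:ℝ) ^ Xexp) := by
            apply mul_le_mul_of_nonneg_left _ (by positivity)
            apply mul_le_mul_of_nonneg_left _ hδ0
            rw [← zpow_add₀ (by norm_num : (2:ℝ) ≠ 0)]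
            exact zpow_le_zpow_right₀ (by norm_num : (1:ℝ) ≤ 2) hexple
    · rw [if_neg hne]
      rw [Finset.not_nonempty_iff_eq_empty] at hne
      rw [hne]
      simp
  have hgoodcard : (univ.filter fun m : Fin w =>
      (X.filter (fun x => key x = m)).Nonempty).card ≤ u := by
    have h1 : (univ.filter fun m : Fin w =>
        (X.filter (fun x => key x = m)).Nonempty).card ≤ (Finset.range u).card :=
      Finset.card_le_card_of_injOn (fun m : Fin w => m.val)
        (fun m hm => Finset.mem_range.mpr (hmu m.val (stepE m (mem_filter.mp hm).2).2))
        (fun m₁ _ m₂ _ h => Fin.ext h)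
    rw [Finset.card_range] at h1
    exact h1
  calc (bad.card : ℝ) ≤ ((∑ x ∈ X, cnt x : ℕ) : ℝ) := by exact_mod_cast stepA
    _ = ∑ x ∈ X, (cnt x : ℝ) := by push_cast; rfl
    _ = ∑ m : Fin w, ∑ x ∈ X.filter (fun x => key x = m), (cnt x : ℝ) :=
        (Finset.sum_fiberwise X key (fun x => (cnt x : ℝ))).symm
    _ ≤ ∑ m : Fin w, (if (X.filter (fun x => key x = m)).Nonempty
          then (cardL : ℝ) * ((1 - (2:ℝ) ^ (-(rmax : ℤ))) * (2:ℝ) ^ Xexp) else 0) :=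
        Finset.sum_le_sum (fun m _ => hterm m)
    _ = ∑ m ∈ univ.filter (fun m : Fin w => (X.filter (fun x => key x = m)).Nonempty),
          (cardL : ℝ) * ((1 - (2:ℝ) ^ (-(rmax : ℤ))) * (2:ℝ) ^ Xexp) :=
        (Finset.sum_filter _ _).symm
    _ = ((univ.filter (fun m : Fin w => (X.filter (fun x => key x = m)).Nonempty)).card : ℝ)
          * ((cardL : ℝ) * ((1 - (2:ℝ) ^ (-(rmax : ℤ))) * (2:ℝ) ^ Xexp)) := by
        rw [Finset.sum_const, nsmul_eq_mul]
    _ ≤ (u : ℝ) * ((cardL : ℝ) * ((1 - (2:ℝ) ^ (-(rmax : ℤ))) * (2:ℝ) ^ Xexp)) := by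
        apply mul_le_mul_of_nonneg_right _ (by positivity)
        exact_mod_cast hgoodcard
    _ = (u : ℝ) * (1 - (2:ℝ) ^ (-(rmax : ℤ))) * (2:ℝ) ^ Xexp * (cardL : ℝ) := by ring
end

section
/- Let w ≥ 1 and r ≥ 1 be integers, and let r₁,…,r_w be integers with r_j ≥ r for all j. Set r_min = min_j r_j and n = w·r. Let T = [T_{i,j}]_{1≤i,j≤w} be a random block matrix over F₂ (with wr = n rows and Σ_j r_j columns) in which each block T_{i,j} has size r×r_j, where for every pair (i,j) with j ≤ i the entries of T_{i,j} are independent and uniformly distributed on F₂ (independently across all such blocks), and for every pair (i,j) with j > i the block T_{i,j} is an arbitrary fixed r×r_j matrix over F₂. Then for every integer γ with 0 ≤ γ ≤ n−1, setting u = ⌈(n−γ)/r⌉, the probability that rank(T) < n − γ is at most u·(1 − 2^{−r})·2^{−γ + n − w·r_min + (r_min − r)(u−1)}. -/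
open Finset

section Aux

lemma fiber_le {M V : Type*} [AddCommGroup M] [Module (ZMod 2) M] [AddCommGroup V]
    [Module (ZMod 2) V] [Fintype M] [Fintype V] [DecidableEq V]
    (f : M →ₗ[ZMod 2] V) (hf : Function.Surjective f) (v : V) :
    (Finset.univ.filter (fun m => f m = v)).card * Fintype.card V ≤ Fintype.card M := by
  classical
  obtain ⟨m₀, hm₀⟩ := hf v
  have h1 : (Finset.univ.filter (fun m => f m = v)).card ≤ Nat.card (LinearMap.ker f) := by
    rw [Nat.card_eq_fintype_card, ← Fintype.card_coe]
    apply Fintype.card_le_of_injective (fun m => ⟨m.1 - m₀, by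
      have := (Finset.mem_filter.mp m.2).2
      simp [LinearMap.mem_ker, map_sub, this, hm₀]⟩)
    intro a b hab
    ext
    have := congrArg (Subtype.val) hab
    simpa [sub_left_inj] using this
  have h2 : Nat.card M = Nat.card (LinearMap.ker f) * Nat.card (M ⧸ LinearMap.ker f) :=
    Submodule.card_eq_card_quotient_mul_card _
  have h3 : Nat.card (M ⧸ LinearMap.ker f) = Fintype.card V :=
    (Nat.card_congr (f.quotKerEquivOfSurjective hf).toEquiv).trans Nat.card_eq_fintype_card
  calc (Finset.univ.filter (fun m => f m = v)).card * Fintype.card V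
      ≤ Nat.card (LinearMap.ker f) * Fintype.card V := Nat.mul_le_mul_right _ h1
    _ = Fintype.card M := by rw [← h3, ← h2, Nat.card_eq_fintype_card]

lemma card_filter_lt {w : ℕ} {i : ℕ} (hi : i ≤ w) :
    (Finset.univ.filter (fun j : Fin w => j.1 < i)).card = i := by
  classical
  rw [← Fintype.card_coe]
  have e : {j // j ∈ Finset.univ.filter (fun j : Fin w => j.1 < i)} ≃ Fin i :=
    ⟨fun j => ⟨j.1.1, by have := (Finset.mem_filter.mp j.2).2; omega⟩,
    fun j => ⟨⟨j.1, by omega⟩, by simp [j.2]⟩, fun j => by ext; rfl, fun j => by ext; rfl⟩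
  rw [Fintype.card_congr e, Fintype.card_fin]

lemma card_vanish {w r : ℕ} (P : Fin w → Prop) [DecidablePred P] :
    (Finset.univ.filter (fun x : Fin w × Fin r → ZMod 2 =>
      ∀ p : Fin w × Fin r, P p.1 → x p = 0)).card
      = 2 ^ ((Finset.univ.filter (fun j => ¬ P j)).card * r) := by
  classical
  rw [← Fintype.card_coe]
  have e : {x // x ∈ (Finset.univ.filter (fun x : Fin w × Fin r → ZMod 2 =>
      ∀ p : Fin w × Fin r, P p.1 → x p = 0))} ≃ ({p : Fin w × Fin r // ¬ P p.1} → ZMod 2) := by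
    refine ⟨fun x p => x.1 p.1, fun g => ⟨fun p => if h : ¬ P p.1 then g ⟨p, h⟩ else 0, ?_⟩, ?_, ?_⟩
    · simp only [Finset.mem_filter, Finset.mem_univ, true_and]
      intro p hp
      simp [hp]
    · rintro ⟨x, hx⟩
      simp only [Finset.mem_filter, Finset.mem_univ, true_and] at hx
      ext p
      by_cases h : P p.1
      · simp [h, hx p h]
      · simp [h]
    · intro g
      ext p
      simp [p.2]
  rw [Fintype.card_congr e, Fintype.card_fun]
  have e2 : {p : Fin w × Fin r // ¬ P p.1} ≃ {j : Fin w // ¬ P j} × Fin r :=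
    ⟨fun p => (⟨p.1.1, p.2⟩, p.1.2), fun q => ⟨(q.1.1, q.2), q.1.2⟩,
      fun p => rfl, fun q => rfl⟩
  rw [Fintype.card_congr e2, Fintype.card_prod, Fintype.card_fin, Fintype.card_subtype]
  simp

lemma submodule_card {m : Type*} [Fintype m] [DecidableEq m]
    (K : Submodule (ZMod 2) (m → ZMod 2)) [DecidablePred (· ∈ K)] :
    (Finset.univ.filter (· ∈ K)).card = 2 ^ Module.finrank (ZMod 2) K := by
  classical
  have h1 : (Finset.univ.filter (· ∈ K)).card = Nat.card {x // x ∈ K} := by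
    rw [Nat.card_eq_fintype_card, Fintype.card_subtype]
  have h2 : Nat.card {x // x ∈ K} = 2 ^ Module.finrank (ZMod 2) K := by
    rw [Nat.card_eq_fintype_card]
    have h3 := Module.card_eq_pow_finrank (K := ZMod 2) (V := ↥K)
    rwa [ZMod.card] at h3
  rw [h1, h2]

lemma filter_not_lt {w : ℕ} (t : ℕ) :
    (Finset.univ.filter (fun j : Fin w => ¬ t < j.1)).card = min (t + 1) w := by
  classical
  rw [show (Finset.univ.filter (fun j : Fin w => ¬ t < j.1))
      = (Finset.univ.filter (fun j : Fin w => j.1 < min (t + 1) w)) by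
    ext j
    simp only [Finset.mem_filter, Finset.mem_univ, true_and]
    have hj := j.isLt
    omega]
  exact card_filter_lt (min_le_right _ _)

end Aux

/-- **Lemma on RBLT matrices, "horizontal" case `r_j ≥ r`.**
A random block lower-triangular (RBLT) matrix `T = [T_{i,j}]` with parameters `w`, `r`,
`{r_j}` (`r_j ≥ r`) has `n = w·r` rows and `Σ_j r_j` columns; the blocks `T_{i,j}` with
`j ≤ i` are `r × r_j` matrices with i.i.d. uniform entries over `F₂` (modelled by sampling
the family `L` of all lower blocks uniformly), and the blocks with `j > i` are arbitrary
fixed matrices `F i j`.  Then for every `0 ≤ γ ≤ n − 1`, with `u = ⌈(n−γ)/r⌉`,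
`Pr{rank T < n − γ} ≤ u (1 − 2^{−r}) 2^{−γ + n − w·r_min + (r_min − r)(u−1)}`.
The probability is expressed as the fraction of block assignments `L` for which the
resulting matrix has rank less than `n − γ`. -/
theorem stmt_2 (w r : ℕ) (hw : 1 ≤ w) (hr : 1 ≤ r)
    (rj : Fin w → ℕ) (hrj : ∀ j, r ≤ rj j)
    (rmin : ℕ) (hrmin : IsLeast (Set.range rj) rmin)
    (n : ℕ) (hn : n = w * r)
    (F : (i j : Fin w) → Matrix (Fin r) (Fin (rj j)) (ZMod 2))
    (γ : ℕ) (hγ : γ ≤ n - 1)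
    (u : ℕ) (hu : (u : ℤ) = ⌈((n - γ : ℕ) : ℚ) / (r : ℚ)⌉) :
    ((Finset.univ.filter
        (fun L : (i j : Fin w) → Matrix (Fin r) (Fin (rj j)) (ZMod 2) =>
          (Matrix.of (fun (p : Fin w × Fin r) (c : Σ j : Fin w, Fin (rj j)) =>
            if c.1 ≤ p.1 then L p.1 c.1 p.2 c.2 else F p.1 c.1 p.2 c.2)).rank
            < n - γ)).card : ℝ)
      / (Fintype.card ((i j : Fin w) → Matrix (Fin r) (Fin (rj j)) (ZMod 2)) : ℝ)
    ≤ (u : ℝ) * (1 - (2 : ℝ) ^ (-(r : ℤ))) *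
        (2 : ℝ) ^ (-(γ : ℤ) + (n : ℤ) - (w : ℤ) * (rmin : ℤ)
          + ((rmin : ℤ) - (r : ℤ)) * ((u : ℤ) - 1)) := by
  classical
  -- notation
  set T : ((i j : Fin w) → Matrix (Fin r) (Fin (rj j)) (ZMod 2)) → Matrix (Fin w × Fin r) (Σ j : Fin w, Fin (rj j)) (ZMod 2) :=
    fun L => Matrix.of (fun (p : Fin w × Fin r) (c : Σ j : Fin w, Fin (rj j)) =>
      if c.1 ≤ p.1 then L p.1 c.1 p.2 c.2 else F p.1 c.1 p.2 c.2) with hT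
  -- basic numeric facts
  have hrmin_le : ∀ j, rmin ≤ rj j := fun j => hrmin.2 ⟨j, rfl⟩
  have hrminr : r ≤ rmin := by
    obtain ⟨j, hj⟩ := hrmin.1
    calc r ≤ rj j := hrj j
      _ = rmin := hj
  have hn1 : 1 ≤ n := by
    rw [hn]; exact Nat.one_le_iff_ne_zero.mpr (by positivity)
  have hγn : γ + 1 ≤ n := by omega
  have hu1 : 1 ≤ u := by
    have h1 : (0:ℚ) < ((n - γ : ℕ) : ℚ) / (r : ℚ) := by
      apply div_pos
      · exact Nat.cast_pos.mpr (by omega)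
      · exact Nat.cast_pos.mpr (by omega)
    have := Int.ceil_pos.mpr h1
    omega
  have hur : n - γ ≤ u * r := by
    have h1 : ((n - γ : ℕ) : ℚ) / (r : ℚ) ≤ (u : ℚ) := by
      rw [show ((u:ℚ)) = ((u:ℤ) : ℚ) by push_cast; ring, hu]
      exact Int.le_ceil _
    rw [div_le_iff₀ (by exact Nat.cast_pos.mpr (by omega))] at h1
    exact_mod_cast h1
  have hwu : (w - u) * r ≤ γ := by
    rcases le_or_gt w u with h | h
    · simp [Nat.sub_eq_zero_of_le h]
    · have h2 : (w - u) * r = w * r - u * r := by rw [Nat.sub_mul]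
      omega
  -- top block index
  set b : ((Fin w × Fin r) → ZMod 2) → ℕ :=
    fun x => ((Finset.univ.filter (fun p => x p ≠ 0)).sup (fun p : Fin w × Fin r => p.1.1))
    with hb
  have hble : ∀ x (p : Fin w × Fin r), x p ≠ 0 → p.1.1 ≤ b x := by
    intro x p hp
    exact Finset.le_sup (f := fun p : Fin w × Fin r => p.1.1)
      (Finset.mem_filter.mpr ⟨Finset.mem_univ _, hp⟩)
  have hbmax : ∀ x : (Fin w × Fin r) → ZMod 2, x ≠ 0 →
      ∃ p : Fin w × Fin r, x p ≠ 0 ∧ p.1.1 = b x := by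
    intro x hx
    obtain ⟨p, hp⟩ := Function.ne_iff.mp hx
    obtain ⟨q, hq, hq2⟩ := Finset.exists_mem_eq_sup
      (Finset.univ.filter (fun p => x p ≠ 0)) ⟨p, Finset.mem_filter.mpr ⟨Finset.mem_univ _, hp⟩⟩
      (fun p : Fin w × Fin r => p.1.1)
    exact ⟨q, (Finset.mem_filter.mp hq).2, hq2.symm⟩
  have hblt : ∀ x : (Fin w × Fin r) → ZMod 2, x ≠ 0 → b x < w := by
    intro x hx
    obtain ⟨p, _, hp2⟩ := hbmax x hx
    rw [← hp2]; exact p.1.2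
  -- the sets
  set S : Finset ((Fin w × Fin r) → ZMod 2) :=
    Finset.univ.filter (fun x => x ≠ 0 ∧ w - u ≤ b x) with hS
  set N : ((Fin w × Fin r) → ZMod 2) → ℕ :=
    fun x => (Finset.univ.filter (fun L : ((i j : Fin w) → Matrix (Fin r) (Fin (rj j)) (ZMod 2)) => Matrix.vecMul x (T L) = 0)).card with hN
  -- Step B : per-vector counting
  have hNx : ∀ x : (Fin w × Fin r) → ZMod 2, x ≠ 0 →
      N x * 2 ^ ((b x + 1) * rmin) ≤ Fintype.card ((i j : Fin w) → Matrix (Fin r) (Fin (rj j)) (ZMod 2)) := by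
    intro x hx
    obtain ⟨p₀, hp₀, hp₀t⟩ := hbmax x hx
    have hx1 : x p₀ = 1 := by
      have h01 : ∀ a : ZMod 2, a ≠ 0 → a = 1 := by decide
      exact h01 _ hp₀
    set Φ : ((i j : Fin w) → Matrix (Fin r) (Fin (rj j)) (ZMod 2)) →ₗ[ZMod 2] ({c : Σ j : Fin w, Fin (rj j) // c.1 ≤ p₀.1} → ZMod 2) :=
      { toFun := fun L c => ∑ p : Fin w × Fin r,
          x p * (if c.1.1 ≤ p.1 then L p.1 c.1.1 p.2 c.1.2 else 0),
        map_add' := by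
          intro L L'
          funext c
          simp only [Pi.add_apply]
          rw [← Finset.sum_add_distrib]
          apply Finset.sum_congr rfl
          intro p _
          split
          · show x p * (L p.1 c.1.1 p.2 c.1.2 + L' p.1 c.1.1 p.2 c.1.2)
                = x p * L p.1 c.1.1 p.2 c.1.2 + x p * L' p.1 c.1.1 p.2 c.1.2
            ring
          · ring
        map_smul' := by
          intro m L
          funext c
          simp only [Pi.smul_apply, smul_eq_mul, RingHom.id_apply]
          rw [Finset.mul_sum]
          apply Finset.sum_congr rfl
          intro p _
          split
          · show x p * (m * L p.1 c.1.1 p.2 c.1.2) = m * (x p * L p.1 c.1.1 p.2 c.1.2)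
            ring
          · ring } with hΦ
    have hΦap : ∀ (L : ((i j : Fin w) → Matrix (Fin r) (Fin (rj j)) (ZMod 2))) (c : {c : Σ j : Fin w, Fin (rj j) // c.1 ≤ p₀.1}),
        Φ L c = ∑ p : Fin w × Fin r,
          x p * (if c.1.1 ≤ p.1 then L p.1 c.1.1 p.2 c.1.2 else 0) := fun L c => rfl
    have hsurj : Function.Surjective Φ := by
      intro g
      refine ⟨fun i j => Matrix.of (fun ρ c =>
        if h : (j ≤ p₀.1) then
          (if i = p₀.1 ∧ ρ = p₀.2 then g ⟨⟨j, c⟩, h⟩ else 0) else 0), ?_⟩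
      funext c
      rw [hΦap]
      rw [Finset.sum_eq_single p₀]
      · have hc : c.1.1 ≤ p₀.1 := c.2
        simp [hc, hx1]
      · intro p _ hp
        have hne : ¬ (p.1 = p₀.1 ∧ p.2 = p₀.2) := by
          rintro ⟨h1, h2⟩; exact hp (Prod.ext h1 h2)
        have hc : c.1.1 ≤ p₀.1 := c.2
        simp [hc, hne]
      · intro h
        exact absurd (Finset.mem_univ p₀) h
    set v : {c : Σ j : Fin w, Fin (rj j) // c.1 ≤ p₀.1} → ZMod 2 :=
      fun c => - ∑ p : Fin w × Fin r,
        x p * (if c.1.1 ≤ p.1 then 0 else F p.1 c.1.1 p.2 c.1.2) with hv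
    have hNle : N x ≤ (Finset.univ.filter (fun L : ((i j : Fin w) → Matrix (Fin r) (Fin (rj j)) (ZMod 2)) => Φ L = v)).card := by
      rw [hN]
      apply Finset.card_le_card
      intro L hL
      simp only [Finset.mem_filter, Finset.mem_univ, true_and] at hL ⊢
      funext c
      have hc := congrFun hL c.1
      simp only [hT, Matrix.vecMul, dotProduct, Matrix.of_apply] at hc
      have hsplit : (∑ p : Fin w × Fin r, x p *
            (if (c.1.1 : Fin w) ≤ p.1 then L p.1 c.1.1 p.2 c.1.2 else F p.1 c.1.1 p.2 c.1.2))
          = Φ L c + (∑ p : Fin w × Fin r,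
            x p * (if c.1.1 ≤ p.1 then 0 else F p.1 c.1.1 p.2 c.1.2)) := by
        rw [hΦap, ← Finset.sum_add_distrib]
        apply Finset.sum_congr rfl
        intro p _
        split <;> ring
      rw [hsplit] at hc
      rw [show v c = - ∑ p : Fin w × Fin r,
        x p * (if c.1.1 ≤ p.1 then 0 else F p.1 c.1.1 p.2 c.1.2) from rfl]
      exact eq_neg_of_add_eq_zero_left hc
    have hfib := fiber_le Φ hsurj v
    have hcardV : Fintype.card ({c : Σ j : Fin w, Fin (rj j) // c.1 ≤ p₀.1} → ZMod 2)
        = 2 ^ (Fintype.card {c : Σ j : Fin w, Fin (rj j) // c.1 ≤ p₀.1}) := by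
      rw [Fintype.card_fun, ZMod.card]
    have hcardC : (b x + 1) * rmin
        ≤ Fintype.card {c : Σ j : Fin w, Fin (rj j) // c.1 ≤ p₀.1} := by
      have e : {c : Σ j : Fin w, Fin (rj j) // c.1 ≤ p₀.1}
          ≃ Σ j : {j : Fin w // j ≤ p₀.1}, Fin (rj j.1) :=
        ⟨fun c => ⟨⟨c.1.1, c.2⟩, c.1.2⟩, fun c => ⟨⟨c.1.1, c.2⟩, c.1.2⟩,
          fun c => rfl, fun c => rfl⟩
      rw [Fintype.card_congr e, Fintype.card_sigma]
      have hcardsub : Fintype.card {j : Fin w // j ≤ p₀.1} = b x + 1 := by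
        rw [Fintype.card_subtype]
        rw [show (Finset.univ.filter (fun j : Fin w => j ≤ p₀.1)) = Finset.Iic p₀.1 by
          ext j; simp [Finset.mem_Iic]]
        rw [Fin.card_Iic, hp₀t]
      calc (b x + 1) * rmin = ∑ _j : {j : Fin w // j ≤ p₀.1}, rmin := by
            rw [Finset.sum_const, Finset.card_univ, hcardsub, smul_eq_mul]
        _ ≤ ∑ j : {j : Fin w // j ≤ p₀.1}, Fintype.card (Fin (rj j.1)) :=
            Finset.sum_le_sum (fun j _ => by rw [Fintype.card_fin]; exact hrmin_le _)
    calc N x * 2 ^ ((b x + 1) * rmin)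
        ≤ (Finset.univ.filter (fun L : ((i j : Fin w) → Matrix (Fin r) (Fin (rj j)) (ZMod 2)) => Φ L = v)).card
            * 2 ^ (Fintype.card {c : Σ j : Fin w, Fin (rj j) // c.1 ≤ p₀.1}) :=
          Nat.mul_le_mul hNle (Nat.pow_le_pow_right (by norm_num) hcardC)
      _ = (Finset.univ.filter (fun L : ((i j : Fin w) → Matrix (Fin r) (Fin (rj j)) (ZMod 2)) => Φ L = v)).card
            * Fintype.card ({c : Σ j : Fin w, Fin (rj j) // c.1 ≤ p₀.1} → ZMod 2) := by
          rw [hcardV]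
      _ ≤ Fintype.card ((i j : Fin w) → Matrix (Fin r) (Fin (rj j)) (ZMod 2)) := hfib
  -- Step A : many kernel vectors for each bad L
  have hA : ∀ L : ((i j : Fin w) → Matrix (Fin r) (Fin (rj j)) (ZMod 2)), (T L).rank < n - γ →
      2 ^ γ ≤ (S.filter (fun x => Matrix.vecMul x (T L) = 0)).card := by
    intro L hL
    set A := (T L).transpose with hAdef
    set K := LinearMap.ker A.mulVecLin with hKdef
    have hmemK : ∀ x, x ∈ K ↔ Matrix.vecMul x (T L) = 0 := by
      intro x
      rw [hKdef, LinearMap.mem_ker, Matrix.mulVecLin_apply, hAdef, Matrix.mulVec_transpose]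
    have hrn := LinearMap.finrank_range_add_finrank_ker A.mulVecLin
    have hdom : Module.finrank (ZMod 2) ((Fin w × Fin r) → ZMod 2) = n := by
      rw [Module.finrank_fintype_fun_eq_card, Fintype.card_prod, Fintype.card_fin,
        Fintype.card_fin, hn]
    have hKrank : γ + 1 ≤ Module.finrank (ZMod 2) K := by
      have h2 : A.rank = (T L).rank := Matrix.rank_transpose (T L)
      have h4 : A.rank + Module.finrank (ZMod 2) K = n := by
        rw [hKdef, ← hdom]
        exact hrn
      have h5 : A.rank < n - γ := by rw [h2]; exact hL
      omega
    have hKex : ∃ x, x ∈ K ∧ x ≠ 0 := by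
      by_contra h
      push_neg at h
      have hbot : K = ⊥ := (Submodule.eq_bot_iff K).mpr (fun x hx => not_not.mp (fun hne => hne (h x hx)))
      rw [hbot, finrank_bot] at hKrank
      omega
    obtain ⟨x₀, hx₀K, hx₀ne⟩ := hKex
    set Kfin : Finset ((Fin w × Fin r) → ZMod 2) := Finset.univ.filter (· ∈ K) with hKfin
    set D := Kfin.filter (fun x => x ≠ 0) with hD
    have hDne : D.Nonempty :=
      ⟨x₀, by simp only [hD, hKfin, Finset.mem_filter, Finset.mem_univ, true_and]
              exact ⟨hx₀K, hx₀ne⟩⟩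
    obtain ⟨xm, hxmD, hxm⟩ := Finset.exists_mem_eq_sup D hDne b
    set t := D.sup b with ht
    clear_value t
    have hbub : ∀ x ∈ K, x ≠ 0 → b x ≤ t :=
      fun x hx hne => ht ▸ Finset.le_sup (by
        simp only [hD, hKfin, Finset.mem_filter, Finset.mem_univ, true_and]
        exact ⟨hx, hne⟩)
    have hvanish : ∀ x ∈ K, ∀ p : Fin w × Fin r, t < p.1.1 → x p = 0 := by
      intro x hxK p hp
      by_contra hne
      have hxne : x ≠ 0 := fun h0 => hne (by rw [h0]; rfl)
      have h1 := hble x p hne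
      have h2 := hbub x hxK hxne
      omega
    have hcard1 : Kfin.card ≤ 2 ^ (min (t + 1) w * r) := by
      have hsubset : Kfin ⊆ Finset.univ.filter
          (fun x : Fin w × Fin r → ZMod 2 => ∀ p : Fin w × Fin r, t < p.1.1 → x p = 0) := by
        intro x hxm2
        simp only [hKfin, Finset.mem_filter, Finset.mem_univ, true_and] at hxm2 ⊢
        exact hvanish x hxm2
      have hcv := card_vanish (w := w) (r := r) (fun j : Fin w => t < j.1)
      have hfeq : (Finset.univ.filter (fun j : Fin w => ¬ t < j.1)).card = min (t + 1) w :=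
        filter_not_lt t
      rw [hfeq] at hcv
      calc Kfin.card ≤ _ := Finset.card_le_card hsubset
        _ = 2 ^ (min (t + 1) w * r) := hcv
    have hKfc : Kfin.card = 2 ^ Module.finrank (ZMod 2) K := submodule_card K
    have htγ : γ + 1 ≤ (t + 1) * r := by
      have h1 : 2 ^ (γ + 1) ≤ 2 ^ (min (t + 1) w * r) := by
        calc 2 ^ (γ + 1) ≤ 2 ^ Module.finrank (ZMod 2) K :=
              Nat.pow_le_pow_right (by norm_num) hKrank
          _ = Kfin.card := hKfc.symm
          _ ≤ _ := hcard1
      have h2 : γ + 1 ≤ min (t + 1) w * r := (Nat.pow_le_pow_iff_right (by norm_num)).mp h1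
      calc γ + 1 ≤ min (t + 1) w * r := h2
        _ ≤ (t + 1) * r := Nat.mul_le_mul_right r (min_le_left _ _)
    have hwut : w - u ≤ t := by
      have h2 : (w - u) * r < (t + 1) * r := by omega
      have h3 : w - u < t + 1 := by
        by_contra hcon
        push_neg at hcon
        exact absurd h2 (not_lt.mpr (Nat.mul_le_mul_right r hcon))
      omega
    set V' : Submodule (ZMod 2) ((Fin w × Fin r) → ZMod 2) :=
      { carrier := {x | ∀ p : Fin w × Fin r, t ≤ p.1.1 → x p = 0},
        add_mem' := by
          intro a c ha hc p hp
          show a p + c p = 0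
          rw [ha p hp, hc p hp, add_zero]
        zero_mem' := fun p hp => rfl
        smul_mem' := by
          intro m a ha p hp
          show m • a p = 0
          rw [ha p hp, smul_zero] } with hV'
    have hmemV' : ∀ x, x ∈ V' ↔ ∀ p : Fin w × Fin r, t ≤ p.1.1 → x p = 0 := fun x => Iff.rfl
    have hlt : K ⊓ V' < K := by
      refine lt_of_le_of_ne inf_le_left (fun heq => ?_)
      have hxmD' := hxmD
      simp only [hD, hKfin, Finset.mem_filter, Finset.mem_univ, true_and] at hxmD'
      obtain ⟨pm, hpm, hpmt⟩ := hbmax xm hxmD'.2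
      have hxmK : xm ∈ K ⊓ V' := by rw [heq]; exact hxmD'.1
      exact hpm (((hmemV' xm).mp hxmK.2) pm (by rw [hpmt, ← hxm]))
    haveI : FiniteDimensional (ZMod 2) ↥K := inferInstance
    have hK'rank : Module.finrank (ZMod 2) ↥(K ⊓ V') < Module.finrank (ZMod 2) ↥K :=
      Submodule.finrank_lt_finrank_of_lt hlt
    set K'fin : Finset ((Fin w × Fin r) → ZMod 2) := Finset.univ.filter (· ∈ K ⊓ V') with hK'fin
    have hK'fc : K'fin.card = 2 ^ Module.finrank (ZMod 2) ↥(K ⊓ V') := submodule_card _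
    have hK'sub : K'fin ⊆ Kfin := by
      intro x hxm2
      simp only [hK'fin, hKfin, Finset.mem_filter, Finset.mem_univ, true_and] at hxm2 ⊢
      exact hxm2.1
    have hsd : Kfin \ K'fin ⊆ S.filter (fun x => Matrix.vecMul x (T L) = 0) := by
      intro x hxm2
      rw [Finset.mem_sdiff] at hxm2
      obtain ⟨hx1, hx2⟩ := hxm2
      have hxK : x ∈ K := by
        simpa only [hKfin, Finset.mem_filter, Finset.mem_univ, true_and] using hx1
      have hxnV : ¬ x ∈ V' := by
        intro hv
        exact hx2 (by
          simp only [hK'fin, Finset.mem_filter, Finset.mem_univ, true_and,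
            Submodule.mem_inf]
          exact ⟨hxK, hv⟩)
      rw [hmemV'] at hxnV
      push_neg at hxnV
      obtain ⟨p, hp1, hp2⟩ := hxnV
      have hxne : x ≠ 0 := fun h0 => hp2 (by rw [h0]; rfl)
      have hbp := hble x p hp2
      refine Finset.mem_filter.mpr ⟨Finset.mem_filter.mpr ⟨Finset.mem_univ _, hxne, by omega⟩,
        (hmemK x).mp hxK⟩
    have hcards : 2 ^ γ ≤ (Kfin \ K'fin).card := by
      rw [Finset.card_sdiff_of_subset hK'sub, hKfc, hK'fc]
      set d := Module.finrank (ZMod 2) ↥K with hd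
      set d' := Module.finrank (ZMod 2) ↥(K ⊓ V') with hd'
      have h1 : 2 ^ d' ≤ 2 ^ (d - 1) := Nat.pow_le_pow_right (by norm_num) (by omega)
      have h2 : 2 ^ γ ≤ 2 ^ (d - 1) := Nat.pow_le_pow_right (by norm_num) (by omega)
      have h3 : 2 ^ d = 2 * 2 ^ (d - 1) := by
        rw [← pow_succ']
        congr 1
        omega
      omega
    exact le_trans hcards (Finset.card_le_card hsd)
  -- Markov / double counting
  have hMarkov : (Finset.univ.filter (fun L : ((i j : Fin w) → Matrix (Fin r) (Fin (rj j)) (ZMod 2)) => (T L).rank < n - γ)).card * 2 ^ γ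
      ≤ ∑ x ∈ S, N x := by
    calc (Finset.univ.filter (fun L : ((i j : Fin w) → Matrix (Fin r) (Fin (rj j)) (ZMod 2)) => (T L).rank < n - γ)).card * 2 ^ γ
        = ∑ _L ∈ Finset.univ.filter (fun L : ((i j : Fin w) → Matrix (Fin r) (Fin (rj j)) (ZMod 2)) => (T L).rank < n - γ), 2 ^ γ := by
          rw [Finset.sum_const, smul_eq_mul]
      _ ≤ ∑ L ∈ Finset.univ.filter (fun L : ((i j : Fin w) → Matrix (Fin r) (Fin (rj j)) (ZMod 2)) => (T L).rank < n - γ),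
            (S.filter (fun x => Matrix.vecMul x (T L) = 0)).card :=
          Finset.sum_le_sum (fun L hL => hA L (Finset.mem_filter.mp hL).2)
      _ ≤ ∑ L ∈ (Finset.univ : Finset ((i j : Fin w) → Matrix (Fin r) (Fin (rj j)) (ZMod 2))),
            (S.filter (fun x => Matrix.vecMul x (T L) = 0)).card :=
          Finset.sum_le_sum_of_subset (Finset.subset_univ _)
      _ = ∑ L ∈ (Finset.univ : Finset ((i j : Fin w) → Matrix (Fin r) (Fin (rj j)) (ZMod 2))), ∑ x ∈ S,
            (if Matrix.vecMul x (T L) = 0 then 1 else 0) := by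
          apply Finset.sum_congr rfl
          intro L _
          rw [Finset.card_filter]
      _ = ∑ x ∈ S, ∑ L ∈ (Finset.univ : Finset ((i j : Fin w) → Matrix (Fin r) (Fin (rj j)) (ZMod 2))),
            (if Matrix.vecMul x (T L) = 0 then 1 else 0) := Finset.sum_comm
      _ = ∑ x ∈ S, N x := by
          apply Finset.sum_congr rfl
          intro x _
          simp only [hN]
          exact (Finset.card_filter _ _).symm
  -- fiber counting over i
  have hfiber : ∀ i, i < w → (S.filter (fun x => b x = i)).card
      ≤ (2 ^ r - 1) * 2 ^ (i * r) := by
    intro i hi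
    set F1 := Finset.univ.filter (fun x : Fin w × Fin r → ZMod 2 =>
      ∀ p : Fin w × Fin r, i < p.1.1 → x p = 0) with hF1
    set F2 := Finset.univ.filter (fun x : Fin w × Fin r → ZMod 2 =>
      ∀ p : Fin w × Fin r, i ≤ p.1.1 → x p = 0) with hF2
    have hsub21 : F2 ⊆ F1 := by
      intro x hx
      simp only [hF1, hF2, Finset.mem_filter, Finset.mem_univ, true_and] at hx ⊢
      exact fun p hp => hx p (by omega)
    have hsub2 : S.filter (fun x => b x = i) ⊆ F1 \ F2 := by
      intro x hx
      simp only [hS, hF1, hF2, Finset.mem_filter, Finset.mem_univ, true_and,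
        Finset.mem_sdiff] at hx ⊢
      obtain ⟨⟨hxne, _⟩, hbi⟩ := hx
      constructor
      · intro p hp
        by_contra hne
        have := hble x p hne
        omega
      · intro hall
        obtain ⟨p, hp1, hp2⟩ := hbmax x hxne
        exact hp1 (hall p (by omega))
    have hc1 : F1.card = 2 ^ ((i + 1) * r) := by
      rw [hF1, card_vanish (w := w) (r := r) (fun j : Fin w => i < j.1), filter_not_lt]
      rw [Nat.min_eq_left (by omega)]
    have hc2 : F2.card = 2 ^ (i * r) := by
      rw [hF2, card_vanish (w := w) (r := r) (fun j : Fin w => i ≤ j.1)]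
      have h9 : (Finset.univ.filter (fun j : Fin w => ¬ i ≤ j.1)).card = i := by
        rw [show (Finset.univ.filter (fun j : Fin w => ¬ i ≤ j.1))
            = (Finset.univ.filter (fun j : Fin w => j.1 < i)) by
          apply Finset.filter_congr
          intro j _
          constructor
          · intro h; omega
          · intro h; omega]
        exact card_filter_lt (by omega)
      rw [h9]
    calc (S.filter (fun x => b x = i)).card ≤ (F1 \ F2).card := Finset.card_le_card hsub2
      _ = 2 ^ ((i + 1) * r) - 2 ^ (i * r) := by rw [Finset.card_sdiff_of_subset hsub21, hc1, hc2]
      _ = 2 ^ (i * r) * 2 ^ r - 2 ^ (i * r) := by rw [add_mul, one_mul, pow_add]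
      _ = (2 ^ r - 1) * 2 ^ (i * r) := by
          rw [Nat.sub_one_mul, mul_comm (2 ^ (i * r)) (2 ^ r)]
  -- final real computation
  have hΩpos : (0:ℝ) < (Fintype.card ((i j : Fin w) → Matrix (Fin r) (Fin (rj j)) (ZMod 2)) : ℝ) := by exact_mod_cast Fintype.card_pos
  set cΩ : ℝ := (Fintype.card ((i j : Fin w) → Matrix (Fin r) (Fin (rj j)) (ZMod 2)) : ℝ) with hcΩ
  set cstar : ℝ := (1 - (2:ℝ) ^ (-(r:ℤ)))
      * (2:ℝ) ^ (((w:ℤ) + 1 - (u:ℤ)) * ((r:ℤ) - (rmin:ℤ))) with hcstar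
  have hzz : ∀ a c : ℤ, (2:ℝ) ^ (a + c) = 2 ^ a * 2 ^ c :=
    fun a c => zpow_add₀ two_ne_zero a c
  have h2rle1 : (2:ℝ) ^ (-(r:ℤ)) ≤ 1 := by
    have := zpow_le_zpow_right₀ (one_le_two (α := ℝ)) (show -(r:ℤ) ≤ 0 by omega)
    simpa using this
  have hcstar_nonneg : 0 ≤ cstar := by
    apply mul_nonneg
    · linarith
    · positivity
  have hNxR : ∀ x ∈ S, (N x : ℝ) ≤ cΩ * (2:ℝ) ^ (-(((b x + 1) * rmin : ℕ) : ℤ)) := by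
    intro x hxS
    have hxne : x ≠ 0 := (Finset.mem_filter.mp hxS).2.1
    have h' : (N x : ℝ) * (2:ℝ) ^ (((b x + 1) * rmin : ℕ) : ℤ) ≤ cΩ := by
      rw [zpow_natCast, hcΩ]
      exact_mod_cast hNx x hxne
    rw [zpow_neg, ← div_eq_mul_inv, le_div_iff₀ (by positivity)]
    exact h'
  have hterm : ∀ i ∈ Finset.Ico (w - u) w,
      ((S.filter (fun x => b x = i)).card : ℝ)
        * (2:ℝ) ^ (-(((i + 1) * rmin : ℕ) : ℤ)) ≤ cstar := by
    intro i hi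
    rw [Finset.mem_Ico] at hi
    have hE : (0:ℝ) < (2:ℝ) ^ (-(((i + 1) * rmin : ℕ) : ℤ)) := by positivity
    have hc : (((2 ^ r - 1) * 2 ^ (i * r) : ℕ) : ℝ)
        = ((2:ℝ) ^ (r:ℤ) - 1) * (2:ℝ) ^ ((i:ℤ) * (r:ℤ)) := by
      have hstep : (((2 ^ r - 1) * 2 ^ (i * r) : ℕ) : ℝ)
          = ((2:ℝ) ^ (r:ℕ) - 1) * (2:ℝ) ^ ((i * r : ℕ)) := by
        push_cast [Nat.one_le_two_pow]
        ring
      rw [hstep, ← zpow_natCast (2:ℝ) r, ← zpow_natCast (2:ℝ) (i * r)]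
      congr 2
    have step1 : ((S.filter (fun x => b x = i)).card : ℝ)
          * (2:ℝ) ^ (-(((i + 1) * rmin : ℕ) : ℤ))
        ≤ (((2 ^ r - 1) * 2 ^ (i * r) : ℕ) : ℝ)
          * (2:ℝ) ^ (-(((i + 1) * rmin : ℕ) : ℤ)) :=
      mul_le_mul_of_nonneg_right (by exact_mod_cast hfiber i hi.2) hE.le
    have hid : ((2:ℝ) ^ (r:ℤ) - 1) * (2:ℝ) ^ ((i:ℤ) * (r:ℤ))
          * (2:ℝ) ^ (-(((i + 1) * rmin : ℕ) : ℤ))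
        = (1 - (2:ℝ) ^ (-(r:ℤ))) * (2:ℝ) ^ (((i:ℤ) + 1) * ((r:ℤ) - (rmin:ℤ))) := by
      have hexp1 : (-(((i + 1) * rmin : ℕ) : ℤ)) = -(((i:ℤ) + 1) * (rmin:ℤ)) := by
        push_cast; ring
      rw [hexp1]
      rw [show (1 - (2:ℝ) ^ (-(r:ℤ))) = ((2:ℝ) ^ (r:ℤ) - 1) * (2:ℝ) ^ (-(r:ℤ)) by
        rw [sub_mul, ← hzz]; norm_num]
      rw [mul_assoc, mul_assoc, ← hzz, ← hzz]
      congr 2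
      ring
    have hmono : (2:ℝ) ^ (((i:ℤ) + 1) * ((r:ℤ) - (rmin:ℤ)))
        ≤ (2:ℝ) ^ (((w:ℤ) + 1 - (u:ℤ)) * ((r:ℤ) - (rmin:ℤ))) := by
      apply zpow_le_zpow_right₀ one_le_two
      have h1 : (w:ℤ) + 1 - (u:ℤ) ≤ (i:ℤ) + 1 := by
        have := hi.1
        omega
      have h2 : (r:ℤ) - (rmin:ℤ) ≤ 0 := by
        have := hrminr
        omega
      exact mul_le_mul_of_nonpos_right h1 h2
    calc ((S.filter (fun x => b x = i)).card : ℝ)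
          * (2:ℝ) ^ (-(((i + 1) * rmin : ℕ) : ℤ))
        ≤ (((2 ^ r - 1) * 2 ^ (i * r) : ℕ) : ℝ)
          * (2:ℝ) ^ (-(((i + 1) * rmin : ℕ) : ℤ)) := step1
      _ = (1 - (2:ℝ) ^ (-(r:ℤ))) * (2:ℝ) ^ (((i:ℤ) + 1) * ((r:ℤ) - (rmin:ℤ))) := by
          rw [hc, hid]
      _ ≤ cstar := by
          rw [hcstar]
          exact mul_le_mul_of_nonneg_left hmono (by linarith)
  have hsum : ∑ x ∈ S, (N x : ℝ) ≤ cΩ * ((u:ℝ) * cstar) := by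
    calc ∑ x ∈ S, (N x : ℝ)
        ≤ ∑ x ∈ S, cΩ * (2:ℝ) ^ (-(((b x + 1) * rmin : ℕ) : ℤ)) := Finset.sum_le_sum hNxR
      _ = cΩ * ∑ x ∈ S, (2:ℝ) ^ (-(((b x + 1) * rmin : ℕ) : ℤ)) := by rw [Finset.mul_sum]
      _ ≤ cΩ * ((u:ℝ) * cstar) := by
          apply mul_le_mul_of_nonneg_left ?_ hΩpos.le
          have hmaps : ∀ x ∈ S, b x ∈ Finset.Ico (w - u) w := by
            intro x hx
            have hx' := Finset.mem_filter.mp hx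
            rw [Finset.mem_Ico]
            exact ⟨hx'.2.2, hblt x hx'.2.1⟩
          rw [← Finset.sum_fiberwise_of_maps_to hmaps
            (fun x => (2:ℝ) ^ (-(((b x + 1) * rmin : ℕ) : ℤ)))]
          calc ∑ i ∈ Finset.Ico (w - u) w, ∑ x ∈ S.filter (fun x => b x = i),
                (2:ℝ) ^ (-(((b x + 1) * rmin : ℕ) : ℤ))
              ≤ ∑ _i ∈ Finset.Ico (w - u) w, cstar := by
                apply Finset.sum_le_sum
                intro i hi
                have heq : ∑ x ∈ S.filter (fun x => b x = i),
                    (2:ℝ) ^ (-(((b x + 1) * rmin : ℕ) : ℤ))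
                    = ((S.filter (fun x => b x = i)).card : ℝ)
                      * (2:ℝ) ^ (-(((i + 1) * rmin : ℕ) : ℤ)) := by
                  rw [Finset.sum_congr rfl (fun x hx => by
                    rw [(Finset.mem_filter.mp hx).2]), Finset.sum_const, nsmul_eq_mul]
                rw [heq]
                exact hterm i hi
            _ ≤ (u:ℝ) * cstar := by
                rw [Finset.sum_const, nsmul_eq_mul, Nat.card_Ico]
                apply mul_le_mul_of_nonneg_right ?_ hcstar_nonneg
                exact_mod_cast (by omega : w - (w - u) ≤ u)
  show ((Finset.univ.filter (fun L : ((i j : Fin w) → Matrix (Fin r) (Fin (rj j)) (ZMod 2)) => (T L).rank < n - γ)).card : ℝ) / cΩ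
    ≤ (u : ℝ) * (1 - (2 : ℝ) ^ (-(r : ℤ))) *
        (2 : ℝ) ^ (-(γ : ℤ) + (n : ℤ) - (w : ℤ) * (rmin : ℤ)
          + ((rmin : ℤ) - (r : ℤ)) * ((u : ℤ) - 1))
  rw [div_le_iff₀ hΩpos]
  have hpow : (0:ℝ) < (2:ℝ) ^ (γ:ℕ) := by positivity
  apply le_of_mul_le_mul_right ?_ hpow
  have hM : ((Finset.univ.filter (fun L : ((i j : Fin w) → Matrix (Fin r) (Fin (rj j)) (ZMod 2)) => (T L).rank < n - γ)).card : ℝ) * (2:ℝ) ^ (γ:ℕ)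
      ≤ ∑ x ∈ S, (N x : ℝ) := by
    have hcast : (((Finset.univ.filter (fun L : ((i j : Fin w) → Matrix (Fin r) (Fin (rj j)) (ZMod 2)) => (T L).rank < n - γ)).card
        * 2 ^ γ : ℕ) : ℝ) ≤ ((∑ x ∈ S, N x : ℕ) : ℝ) := Nat.cast_le.mpr hMarkov
    push_cast at hcast
    exact hcast
  have hγz : ((2:ℝ) ^ (γ:ℕ)) = (2:ℝ) ^ ((γ:ℤ)) := (zpow_natCast 2 γ).symm
  have hexp : (-(γ : ℤ) + (n : ℤ) - (w : ℤ) * (rmin : ℤ)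
        + ((rmin : ℤ) - (r : ℤ)) * ((u : ℤ) - 1)) + (γ:ℤ)
      = ((w:ℤ) + 1 - (u:ℤ)) * ((r:ℤ) - (rmin:ℤ)) := by
    have hnz : (n:ℤ) = (w:ℤ) * (r:ℤ) := by exact_mod_cast hn
    rw [hnz]; ring
  have hre : (u : ℝ) * (1 - (2 : ℝ) ^ (-(r : ℤ))) *
        (2 : ℝ) ^ (-(γ : ℤ) + (n : ℤ) - (w : ℤ) * (rmin : ℤ)
          + ((rmin : ℤ) - (r : ℤ)) * ((u : ℤ) - 1)) * cΩ * (2:ℝ) ^ (γ:ℕ)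
      = cΩ * ((u:ℝ) * cstar) := by
    rw [hγz, hcstar]
    rw [show (u : ℝ) * (1 - (2 : ℝ) ^ (-(r : ℤ))) *
        (2 : ℝ) ^ (-(γ : ℤ) + (n : ℤ) - (w : ℤ) * (rmin : ℤ)
          + ((rmin : ℤ) - (r : ℤ)) * ((u : ℤ) - 1)) * cΩ * (2:ℝ) ^ ((γ:ℤ))
      = cΩ * ((u:ℝ) * ((1 - (2 : ℝ) ^ (-(r : ℤ))) *
          ((2 : ℝ) ^ (-(γ : ℤ) + (n : ℤ) - (w : ℤ) * (rmin : ℤ)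
          + ((rmin : ℤ) - (r : ℤ)) * ((u : ℤ) - 1)) * (2:ℝ) ^ ((γ:ℤ))))) from by ring]
    rw [← hzz, hexp]
  calc ((Finset.univ.filter (fun L : ((i j : Fin w) → Matrix (Fin r) (Fin (rj j)) (ZMod 2)) => (T L).rank < n - γ)).card : ℝ) * (2:ℝ) ^ (γ:ℕ)
      ≤ ∑ x ∈ S, (N x : ℝ) := hM
    _ ≤ cΩ * ((u:ℝ) * cstar) := hsum
    _ = _ := hre.symm
end
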